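/- Let q : ℝ^n → ℂ be an integrable function supported in the closed unit ball, and let ξ, ξ' ∈ ℝ^n satisfy |ξ - ξ'| ≤ 3. Then |q̂(ξ)| ≤ C · M(q̂)(ξ'), where q̂ is the Fourier transform of q, M is the Hardy–Littlewood maximal operator, and C depends only on n. -/

import Mathlib

open MeasureTheory Metric
open scoped ENNReal

/-- Hardy–Littlewood maximal operator, valued in `ℝ≥0∞`. -/
noncomputable def HLmax {n : ℕ} (f : EuclideanSpace ℝ (Fin n) → ℝ)
    (x : EuclideanSpace ℝ (Fin n)) : ℝ≥0∞ :=
  ⨆ r : {r : ℝ // 0 < r},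
    (volume (ball x r.1))⁻¹ * ∫⁻ y in ball x r.1, ENNReal.ofReal |f y|

open Function
open scoped FourierTransform RealInnerProductSpace ContDiff

section FBMaux

variable {E : Type*} [NormedAddCommGroup E] [NormedSpace ℝ E]

/-- A smooth compactly supported function is a Schwartz map. -/
noncomputable def toSchwartz (f : E → ℂ) (hf : ContDiff ℝ ∞ f) (h : HasCompactSupport f) :
    SchwartzMap E ℂ where
  toFun := f
  smooth' := hf
  decay' := by
    intro k m
    obtain ⟨R, hR0, hR⟩ : ∃ R, 0 < R ∧ tsupport f ⊆ closedBall 0 R := by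
      obtain ⟨R, hR⟩ := h.isCompact.isBounded.subset_closedBall 0
      exact ⟨max R 1, lt_of_lt_of_le one_pos (le_max_right _ _),
        hR.trans (closedBall_subset_closedBall (le_max_left _ _))⟩
    have hsupp : HasCompactSupport (iteratedFDeriv ℝ m f) := h.iteratedFDeriv m
    have hcont : Continuous (iteratedFDeriv ℝ m f) := (hf.iteratedFDeriv_right (m := 0) (by exact_mod_cast le_top)).continuous
    obtain ⟨C, hC⟩ := hsupp.exists_bound_of_continuous hcont
    refine ⟨R ^ k * C, fun x => ?_⟩
    by_cases hx : x ∈ tsupport (iteratedFDeriv ℝ m f)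
    · have hx' : ‖x‖ ≤ R := by
        have := hsupp.isCompact
        have hsub : tsupport (iteratedFDeriv ℝ m f) ⊆ closedBall 0 R := by
          refine (closure_minimal ?_ Metric.isClosed_closedBall)
          exact (support_iteratedFDeriv_subset m).trans hR
        simpa [mem_closedBall, dist_eq_norm] using hsub hx
      have h1 : ‖x‖ ^ k ≤ R ^ k := pow_le_pow_left₀ (norm_nonneg _) hx' k
      have h2 : ‖iteratedFDeriv ℝ m f x‖ ≤ C := hC x
      exact mul_le_mul h1 h2 (norm_nonneg _) (by positivity)
    · have : iteratedFDeriv ℝ m f x = 0 := image_eq_zero_of_notMem_tsupport hx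
      rw [this]
      simp only [norm_zero, mul_zero]
      have : (0:ℝ) ≤ C := le_trans (norm_nonneg _) (hC 0)
      positivity

@[simp] lemma toSchwartz_apply (f : E → ℂ) (hf : ContDiff ℝ ∞ f) (h : HasCompactSupport f)
    (x : E) : toSchwartz f hf h x = f x := rfl

variable {n : ℕ}

private lemma repr_formula (q : EuclideanSpace ℝ (Fin n) → ℂ) (hq : Integrable q volume)
    (hsupp : Function.support q ⊆ closedBall 0 1)
    (χ : SchwartzMap (EuclideanSpace ℝ (Fin n)) ℂ)
    (hχ1 : ∀ x ∈ closedBall (0 : EuclideanSpace ℝ (Fin n)) 1, χ x = 1)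
    (ξ : EuclideanSpace ℝ (Fin n)) :
    𝓕 q ξ = ∫ η, 𝓕 q η * 𝓕 (⇑χ) (ξ - η) := by
  symm
  have hG : ⇑(SchwartzMap.fourierTransformCLM ℝ χ) = 𝓕 ⇑χ := by
    rw [SchwartzMap.fourierTransformCLM_apply, SchwartzMap.fourier_coe]
  have hFχint : Integrable (𝓕 ⇑χ) volume :=
    hG ▸ (SchwartzMap.fourierTransformCLM ℝ χ).integrable
  have hinv : 𝓕⁻ (𝓕 ⇑χ) = ⇑χ := χ.continuous.fourierInv_fourier_eq χ.integrable hFχint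
  have hbase : Integrable (fun p : EuclideanSpace ℝ (Fin n) × EuclideanSpace ℝ (Fin n) =>
      (𝓕 (⇑χ) (ξ - p.1)) * q p.2) (volume.prod volume) :=
    Integrable.mul_prod (hFχint.comp_sub_left ξ) hq
  have hcont : Continuous fun p : EuclideanSpace ℝ (Fin n) × EuclideanSpace ℝ (Fin n) =>
      ((𝐞 (-⟪p.2, p.1⟫) : Circle) : ℂ) :=
    continuous_subtype_val.comp (Real.continuous_fourierChar.comp
      ((continuous_inner.comp (continuous_snd.prodMk continuous_fst)).neg))
  have hker : Integrable (Function.uncurry fun η x =>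
      ((𝐞 (-⟪x, η⟫) : Circle) : ℂ) * q x * 𝓕 (⇑χ) (ξ - η)) (volume.prod volume) := by
    have h1 : Integrable (fun p : EuclideanSpace ℝ (Fin n) × EuclideanSpace ℝ (Fin n) =>
        ((𝐞 (-⟪p.2, p.1⟫) : Circle) : ℂ) * ((𝓕 (⇑χ) (ξ - p.1)) * q p.2)) (volume.prod volume) :=
      hbase.bdd_mul (c := 1) hcont.aestronglyMeasurable (Filter.Eventually.of_forall fun p => (Circle.norm_coe _).le)
    exact h1.congr (Filter.Eventually.of_forall fun p => by
      simp only [Function.uncurry]; ring)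
  calc ∫ η, 𝓕 q η * 𝓕 (⇑χ) (ξ - η)
      = ∫ η, ∫ x, ((𝐞 (-⟪x, η⟫) : Circle) : ℂ) * q x * 𝓕 (⇑χ) (ξ - η) := by
        refine integral_congr_ae (Filter.Eventually.of_forall fun η => ?_)
        dsimp only
        rw [Real.fourier_eq, ← integral_mul_const]
        refine integral_congr_ae (Filter.Eventually.of_forall fun x => ?_)
        dsimp only
        rw [Circle.smul_def, smul_eq_mul]
    _ = ∫ x, ∫ η, ((𝐞 (-⟪x, η⟫) : Circle) : ℂ) * q x * 𝓕 (⇑χ) (ξ - η) :=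
        integral_integral_swap hker
    _ = ∫ x, q x * ∫ η, ((𝐞 (-⟪x, η⟫) : Circle) : ℂ) * 𝓕 (⇑χ) (ξ - η) := by
        refine integral_congr_ae (Filter.Eventually.of_forall fun x => ?_)
        dsimp only
        rw [← integral_const_mul]
        exact integral_congr_ae (Filter.Eventually.of_forall fun η => by ring)
    _ = ∫ x, q x * (((𝐞 (-⟪x, ξ⟫) : Circle) : ℂ) * χ x) := by
        refine integral_congr_ae (Filter.Eventually.of_forall fun x => ?_)
        dsimp only
        congr 1
        have step1 : ∫ η, ((𝐞 (-⟪x, η⟫) : Circle) : ℂ) * 𝓕 (⇑χ) (ξ - η)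
            = ∫ u, ((𝐞 (-⟪x, ξ - u⟫) : Circle) : ℂ) * 𝓕 (⇑χ) u := by
          rw [← integral_sub_left_eq_self
            (fun u => ((𝐞 (-⟪x, ξ - u⟫) : Circle) : ℂ) * 𝓕 (⇑χ) u) volume ξ]
          refine integral_congr_ae (Filter.Eventually.of_forall fun η => ?_)
          dsimp only
          rw [sub_sub_cancel]
        have step2 : ∀ u : EuclideanSpace ℝ (Fin n),
            ((𝐞 (-⟪x, ξ - u⟫) : Circle) : ℂ)
              = ((𝐞 (-⟪x, ξ⟫) : Circle) : ℂ) * ((𝐞 ⟪u, x⟫ : Circle) : ℂ) := by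
          intro u
          rw [← Circle.coe_mul, ← AddChar.map_add_eq_mul]
          congr 1
          rw [inner_sub_right, real_inner_comm u x]
          ring
          rfl
        have step3 : ∫ u, ((𝐞 ⟪u, x⟫ : Circle) : ℂ) * 𝓕 (⇑χ) u = 𝓕⁻ (𝓕 ⇑χ) x := by
          rw [Real.fourierInv_eq]
          refine integral_congr_ae (Filter.Eventually.of_forall fun u => ?_)
          dsimp only
          rw [Circle.smul_def, smul_eq_mul]
        rw [step1]
        simp_rw [step2, mul_assoc]
        rw [integral_const_mul, step3, hinv]
    _ = ∫ x, ((𝐞 (-⟪x, ξ⟫) : Circle) : ℂ) * q x := by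
        refine integral_congr_ae (Filter.Eventually.of_forall fun x => ?_)
        dsimp only
        by_cases hx : q x = 0
        · simp [hx]
        · have h1 : χ x = 1 := hχ1 x (hsupp (mem_support.mpr hx))
          rw [h1]; ring
    _ = 𝓕 q ξ := by
        rw [Real.fourier_eq]
        refine integral_congr_ae (Filter.Eventually.of_forall fun x => ?_)
        dsimp only
        rw [Circle.smul_def, smul_eq_mul]

private lemma hlmax_ball_le {n : ℕ} (f : EuclideanSpace ℝ (Fin n) → ℝ)
    (x : EuclideanSpace ℝ (Fin n)) {R : ℝ} (hR : 0 < R) :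
    ∫⁻ y in ball x R, ENNReal.ofReal |f y| ≤ volume (ball x R) * HLmax f x := by
  have h0 : volume (ball x R) ≠ 0 := (measure_ball_pos volume x hR).ne'
  have ht : volume (ball x R) ≠ ⊤ := measure_ball_lt_top.ne
  have hsup : (volume (ball x R))⁻¹ * ∫⁻ y in ball x R, ENNReal.ofReal |f y| ≤ HLmax f x :=
    le_iSup (fun r : {r : ℝ // 0 < r} =>
      (volume (ball x r.1))⁻¹ * ∫⁻ y in ball x r.1, ENNReal.ofReal |f y|) ⟨R, hR⟩
  calc ∫⁻ y in ball x R, ENNReal.ofReal |f y|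
      = volume (ball x R) * ((volume (ball x R))⁻¹ *
          ∫⁻ y in ball x R, ENNReal.ofReal |f y|) := by
        rw [← mul_assoc, ENNReal.mul_inv_cancel h0 ht, one_mul]
    _ ≤ volume (ball x R) * HLmax f x := mul_le_mul_right hsup _

private theorem aux (n : ℕ) [Nontrivial (EuclideanSpace ℝ (Fin n))] :
    ∃ C : ℝ, 0 < C ∧
      ∀ (q : EuclideanSpace ℝ (Fin n) → ℂ),
        Integrable q volume →
        (Function.support q ⊆ closedBall 0 1) →
        ∀ ξ ξ' : EuclideanSpace ℝ (Fin n), ‖ξ - ξ'‖ ≤ 3 →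
          ENNReal.ofReal ‖FourierTransform.fourier q ξ‖ ≤
            ENNReal.ofReal C * HLmax (fun y => ‖FourierTransform.fourier q y‖) ξ' := by
  -- the bump function
  let c : ContDiffBump (0 : EuclideanSpace ℝ (Fin n)) := ⟨1, 2, one_pos, one_lt_two⟩
  have hcd : ContDiff ℝ ∞ (fun x => (c x : ℂ)) := Complex.ofRealCLM.contDiff.comp c.contDiff
  have hcs : HasCompactSupport (fun x => (c x : ℂ)) :=
    c.hasCompactSupport.comp_left (g := fun t : ℝ => (t : ℂ)) (by simp)
  set χ := toSchwartz (fun x => (c x : ℂ)) hcd hcs with hχdef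
  have hχ1 : ∀ x ∈ closedBall (0 : EuclideanSpace ℝ (Fin n)) 1, χ x = 1 := by
    intro x hx
    have h1 : c x = 1 := c.one_of_mem_closedBall hx
    simp [hχdef, h1]
  set G := SchwartzMap.fourierTransformCLM ℝ χ with hGdef
  have hG : ⇑G = 𝓕 ⇑χ := by
    rw [hGdef, SchwartzMap.fourierTransformCLM_apply, SchwartzMap.fourier_coe]
  obtain ⟨C₀, hC₀pos, hC₀⟩ := G.decay 0 0
  obtain ⟨C₁, hC₁pos, hC₁⟩ := G.decay (n + 1) 0
  have hC₀' : ∀ u, ‖G u‖ ≤ C₀ := fun u => by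
    simpa [norm_iteratedFDeriv_zero] using hC₀ u
  have hC₁' : ∀ u, ‖u‖ ^ (n + 1) * ‖G u‖ ≤ C₁ := fun u => by
    simpa [norm_iteratedFDeriv_zero] using hC₁ u
  set D := max C₀ C₁ with hDdef
  have hD : 0 < D := lt_max_of_lt_left hC₀pos
  set v := (volume (ball (0 : EuclideanSpace ℝ (Fin n)) 1)).toReal with hvdef
  have hv : 0 < v := ENNReal.toReal_pos (measure_ball_pos volume _ one_pos).ne'
    measure_ball_lt_top.ne
  refine ⟨D * 2 ^ (4 * n + 2) * v, by positivity, ?_⟩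
  intro q hq hsupp ξ ξ' hξξ'
  set f : EuclideanSpace ℝ (Fin n) → ℝ := fun y => ‖FourierTransform.fourier q y‖ with hfdef
  set HL := HLmax f ξ' with hHLdef
  -- Step A
  have stepA : ENNReal.ofReal ‖𝓕 q ξ‖ ≤ ∫⁻ η, ENNReal.ofReal (f η * ‖G (ξ - η)‖) := by
    rw [repr_formula q hq hsupp χ hχ1 ξ]
    calc ENNReal.ofReal ‖∫ η, 𝓕 q η * 𝓕 (⇑χ) (ξ - η)‖
        = ‖∫ η, 𝓕 q η * 𝓕 (⇑χ) (ξ - η)‖ₑ := ofReal_norm _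
      _ ≤ ∫⁻ η, ‖𝓕 q η * 𝓕 (⇑χ) (ξ - η)‖ₑ := enorm_integral_le_lintegral_enorm _
      _ = ∫⁻ η, ENNReal.ofReal (f η * ‖G (ξ - η)‖) := by
          refine lintegral_congr fun η => ?_
          rw [← ofReal_norm, norm_mul, hG, hfdef]
  -- the dyadic annuli
  set A : ℕ → Set (EuclideanSpace ℝ (Fin n)) := fun k =>
    match k with
    | 0 => closedBall ξ 1
    | (k + 1) => closedBall ξ (2 ^ (k + 1)) \ closedBall ξ (2 ^ k)
    with hAdef
  have hAmeas : ∀ k, MeasurableSet (A k) := by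
    intro k
    match k with
    | 0 => exact measurableSet_closedBall
    | (k + 1) => exact measurableSet_closedBall.diff measurableSet_closedBall
  have hAsub : ∀ k, A k ⊆ closedBall ξ (2 ^ k) := by
    intro k
    match k with
    | 0 => simpa [hAdef] using subset_rfl
    | (k + 1) => exact Set.diff_subset
  have hcov : (Set.univ : Set (EuclideanSpace ℝ (Fin n))) ⊆ ⋃ k, A k := by
    intro η _
    refine Set.mem_iUnion.mpr ?_
    by_cases h1 : dist η ξ ≤ 1
    · exact ⟨0, by simpa [hAdef] using h1⟩
    · have hex : ∃ k : ℕ, dist η ξ ≤ 2 ^ (k + 1) := by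
        obtain ⟨m, hm⟩ := pow_unbounded_of_one_lt (dist η ξ) (one_lt_two (α := ℝ))
        exact ⟨m, le_of_lt (lt_of_lt_of_le hm (pow_le_pow_right₀ one_le_two (Nat.le_succ m)))⟩
      classical
      refine ⟨Nat.find hex + 1, ?_⟩
      have h2 : dist η ξ ≤ 2 ^ (Nat.find hex + 1) := Nat.find_spec hex
      have h3 : ¬ dist η ξ ≤ 2 ^ (Nat.find hex) := by
        rcases Nat.eq_zero_or_pos (Nat.find hex) with hk | hk
        · rw [hk]; simpa using h1
        · have h4 : ¬ dist η ξ ≤ 2 ^ (Nat.find hex - 1 + 1) :=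
            Nat.find_min hex (Nat.pred_lt hk.ne')
          rwa [Nat.sub_add_cancel hk] at h4
      exact ⟨mem_closedBall.mpr h2, fun hmem => h3 (mem_closedBall.mp hmem)⟩
  -- decay bound on each annulus
  have hGbd : ∀ k, ∀ η ∈ A k, ‖G (ξ - η)‖ ≤ D * 2 ^ (n + 1) / (2 ^ k) ^ (n + 1) := by
    intro k η hη
    match k with
    | 0 =>
      have : ((2 : ℝ) ^ 0) ^ (n + 1) = 1 := by norm_num
      rw [this, div_one]
      refine (hC₀' _).trans ?_
      calc C₀ ≤ D := le_max_left _ _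
        _ ≤ D * 2 ^ (n + 1) := le_mul_of_one_le_right hD.le (one_le_pow₀ one_le_two)
    | (k + 1) =>
      have hd : (2 : ℝ) ^ k < dist η ξ := not_le.mp fun h => hη.2 (mem_closedBall.mpr h)
      have hnorm : (2 : ℝ) ^ k < ‖ξ - η‖ := by
        rwa [← dist_eq_norm, dist_comm]
      have hpos : (0 : ℝ) < (2 ^ k : ℝ) ^ (n + 1) := by positivity
      have h5 : ((2 : ℝ) ^ k) ^ (n + 1) * ‖G (ξ - η)‖ ≤ C₁ := by
        refine le_trans ?_ (hC₁' (ξ - η))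
        exact mul_le_mul_of_nonneg_right
          (pow_le_pow_left₀ (by positivity) hnorm.le _) (norm_nonneg _)
      have h6 : ‖G (ξ - η)‖ ≤ D / (2 ^ k) ^ (n + 1) := by
        rw [le_div_iff₀ hpos, mul_comm]
        exact h5.trans (le_max_right _ _)
      have h7 : D * 2 ^ (n + 1) / ((2 : ℝ) ^ (k + 1)) ^ (n + 1) = D / (2 ^ k) ^ (n + 1) := by
        have h8 : ((2 : ℝ) ^ (k + 1)) ^ (n + 1) = (2 ^ k) ^ (n + 1) * 2 ^ (n + 1) := by
          rw [show ((2:ℝ) ^ (k+1)) = 2 ^ k * 2 from pow_succ 2 k, mul_pow]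
        rw [h8]
        field_simp
      rw [h7]; exact h6
  -- annuli sit inside balls around ξ'
  have hsub : ∀ k, A k ⊆ ball ξ' (2 ^ (k + 3)) := by
    intro k η hη
    have h1 : dist η ξ ≤ 2 ^ k := mem_closedBall.mp (hAsub k hη)
    have h2 : dist ξ ξ' ≤ 3 := by rw [dist_eq_norm]; exact hξξ'
    have h3 : (1 : ℝ) ≤ 2 ^ k := one_le_pow₀ one_le_two
    have h4 : (2 : ℝ) ^ (k + 3) = 8 * 2 ^ k := by ring
    refine mem_ball.mpr (lt_of_le_of_lt (dist_triangle η ξ ξ') ?_)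
    rw [h4]; nlinarith
  -- maximal function bound on balls
  have hball : ∀ k : ℕ, ∫⁻ η in ball ξ' (2 ^ (k + 3)), ENNReal.ofReal (f η) ≤
      ENNReal.ofReal (((2 : ℝ) ^ (k + 3)) ^ n) * (ENNReal.ofReal v * HL) := by
    intro k
    have hR : (0 : ℝ) < 2 ^ (k + 3) := by positivity
    have h1 := hlmax_ball_le f ξ' hR
    have h2 : volume (ball ξ' ((2 : ℝ) ^ (k + 3))) =
        ENNReal.ofReal (((2 : ℝ) ^ (k + 3)) ^ n) * ENNReal.ofReal v := by
      rw [Measure.addHaar_ball volume ξ' hR.le, finrank_euclideanSpace_fin,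
        hvdef, ENNReal.ofReal_toReal measure_ball_lt_top.ne]
    have h3 : ∀ y, ENNReal.ofReal (f y) = ENNReal.ofReal |f y| := fun y => by
      rw [hfdef]; simp [abs_norm]
    calc ∫⁻ η in ball ξ' (2 ^ (k + 3)), ENNReal.ofReal (f η)
        = ∫⁻ η in ball ξ' (2 ^ (k + 3)), ENNReal.ofReal |f η| := by
          exact lintegral_congr fun η => h3 η
      _ ≤ volume (ball ξ' ((2 : ℝ) ^ (k + 3))) * HL := h1
      _ = ENNReal.ofReal (((2 : ℝ) ^ (k + 3)) ^ n) * (ENNReal.ofReal v * HL) := by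
          rw [h2, mul_assoc]
  -- per-annulus estimate
  have hterm : ∀ k : ℕ, ∫⁻ η in A k, ENNReal.ofReal (f η * ‖G (ξ - η)‖) ≤
      ENNReal.ofReal (D * 2 ^ (4 * n + 1)) * (2 : ℝ≥0∞)⁻¹ ^ k * (ENNReal.ofReal v * HL) := by
    intro k
    have hbd : (0:ℝ) ≤ D * 2 ^ (n + 1) / (2 ^ k) ^ (n + 1) := by positivity
    calc ∫⁻ η in A k, ENNReal.ofReal (f η * ‖G (ξ - η)‖)
        ≤ ∫⁻ η in A k, ENNReal.ofReal (D * 2 ^ (n + 1) / (2 ^ k) ^ (n + 1)) *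
            ENNReal.ofReal (f η) := by
          refine setLIntegral_mono' (hAmeas k) fun η hη => ?_
          rw [← ENNReal.ofReal_mul hbd]
          refine ENNReal.ofReal_le_ofReal ?_
          rw [mul_comm (D * 2 ^ (n + 1) / (2 ^ k) ^ (n + 1))]
          exact mul_le_mul_of_nonneg_left (hGbd k η hη) (norm_nonneg _)
      _ = ENNReal.ofReal (D * 2 ^ (n + 1) / (2 ^ k) ^ (n + 1)) *
            ∫⁻ η in A k, ENNReal.ofReal (f η) :=
          lintegral_const_mul' _ _ ENNReal.ofReal_ne_top
      _ ≤ ENNReal.ofReal (D * 2 ^ (n + 1) / (2 ^ k) ^ (n + 1)) *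
            ∫⁻ η in ball ξ' (2 ^ (k + 3)), ENNReal.ofReal (f η) :=
          mul_le_mul_right (lintegral_mono_set (hsub k)) _
      _ ≤ ENNReal.ofReal (D * 2 ^ (n + 1) / (2 ^ k) ^ (n + 1)) *
            (ENNReal.ofReal (((2 : ℝ) ^ (k + 3)) ^ n) * (ENNReal.ofReal v * HL)) :=
          mul_le_mul_right (hball k) _
      _ = ENNReal.ofReal (D * 2 ^ (4 * n + 1)) * (2 : ℝ≥0∞)⁻¹ ^ k * (ENNReal.ofReal v * HL) := by
          rw [← mul_assoc, ← ENNReal.ofReal_mul hbd]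
          congr 1
          have hkey : D * 2 ^ (n + 1) / (2 ^ k) ^ (n + 1) * ((2 : ℝ) ^ (k + 3)) ^ n =
              D * 2 ^ (4 * n + 1) * ((2 : ℝ) ^ k)⁻¹ := by
            rw [← pow_mul, ← pow_mul, ← div_eq_mul_inv, div_mul_eq_mul_div,
              div_eq_div_iff (by positivity) (by positivity)]
            simp only [mul_assoc, ← pow_add]
            congr 2
            ring
          rw [hkey, ENNReal.ofReal_mul (by positivity),
            ENNReal.ofReal_inv_of_pos (by positivity), ENNReal.ofReal_pow zero_le_two,
            ENNReal.ofReal_ofNat, ← ENNReal.inv_pow]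
  -- put everything together
  calc ENNReal.ofReal ‖FourierTransform.fourier q ξ‖
      ≤ ∫⁻ η, ENNReal.ofReal (f η * ‖G (ξ - η)‖) := stepA
    _ = ∫⁻ η in Set.univ, ENNReal.ofReal (f η * ‖G (ξ - η)‖) := (setLIntegral_univ _).symm
    _ ≤ ∫⁻ η in ⋃ k, A k, ENNReal.ofReal (f η * ‖G (ξ - η)‖) := lintegral_mono_set hcov
    _ ≤ ∑' k, ∫⁻ η in A k, ENNReal.ofReal (f η * ‖G (ξ - η)‖) := lintegral_iUnion_le _ _
    _ ≤ ∑' k : ℕ, ENNReal.ofReal (D * 2 ^ (4 * n + 1)) * (2 : ℝ≥0∞)⁻¹ ^ k *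
          (ENNReal.ofReal v * HL) := ENNReal.tsum_le_tsum hterm
    _ = ENNReal.ofReal (D * 2 ^ (4 * n + 1)) * (∑' k : ℕ, (2 : ℝ≥0∞)⁻¹ ^ k) *
          (ENNReal.ofReal v * HL) := by
        rw [ENNReal.tsum_mul_right, ENNReal.tsum_mul_left]
    _ = ENNReal.ofReal (D * 2 ^ (4 * n + 1)) * 2 * (ENNReal.ofReal v * HL) := by
        rw [ENNReal.tsum_geometric, ENNReal.one_sub_inv_two, inv_inv]
    _ = (ENNReal.ofReal (D * 2 ^ (4 * n + 1)) * 2 * ENNReal.ofReal v) * HL := by ring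
    _ = ENNReal.ofReal (D * 2 ^ (4 * n + 2) * v) * HL := by
        congr 1
        rw [← ENNReal.ofReal_ofNat 2, ← ENNReal.ofReal_mul (by positivity),
          ← ENNReal.ofReal_mul (by positivity)]
        congr 1
        rw [pow_succ]
        ring

private theorem zerocase :
      ∀ (q : EuclideanSpace ℝ (Fin 0) → ℂ),
        Integrable q volume →
        (Function.support q ⊆ closedBall 0 1) →
        ∀ ξ ξ' : EuclideanSpace ℝ (Fin 0), ‖ξ - ξ'‖ ≤ 3 →
          ENNReal.ofReal ‖FourierTransform.fourier q ξ‖ ≤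
            ENNReal.ofReal 1 * HLmax (fun y => ‖FourierTransform.fourier q y‖) ξ' := by
  intro q hq hsupp ξ ξ' hd
  have hsub : Subsingleton (EuclideanSpace ℝ (Fin 0)) := inferInstance
  have hξ : ξ = ξ' := Subsingleton.elim ξ ξ'
  subst hξ
  set f : EuclideanSpace ℝ (Fin 0) → ℝ := fun y => ‖FourierTransform.fourier q y‖ with hfdef
  have h0 : volume (ball ξ 1) ≠ 0 := (measure_ball_pos volume ξ one_pos).ne'
  have ht : volume (ball ξ 1) ≠ ⊤ := measure_ball_lt_top.ne
  have hconst : ∫⁻ y in ball ξ 1, ENNReal.ofReal |f y| =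
      ENNReal.ofReal ‖FourierTransform.fourier q ξ‖ * volume (ball ξ 1) := by
    have : ∀ y : EuclideanSpace ℝ (Fin 0), ENNReal.ofReal |f y| =
        ENNReal.ofReal ‖FourierTransform.fourier q ξ‖ := fun y => by
      rw [Subsingleton.elim y ξ, hfdef, abs_norm]
    calc ∫⁻ y in ball ξ 1, ENNReal.ofReal |f y|
        = ∫⁻ _ in ball ξ 1, ENNReal.ofReal ‖FourierTransform.fourier q ξ‖ :=
          lintegral_congr fun y => this y
      _ = ENNReal.ofReal ‖FourierTransform.fourier q ξ‖ * volume (ball ξ 1) :=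
          setLIntegral_const _ _
  have hle : ENNReal.ofReal ‖FourierTransform.fourier q ξ‖ ≤ HLmax f ξ := by
    have h1 : (volume (ball ξ 1))⁻¹ * ∫⁻ y in ball ξ 1, ENNReal.ofReal |f y| ≤ HLmax f ξ :=
      le_iSup (fun r : {r : ℝ // 0 < r} =>
        (volume (ball ξ r.1))⁻¹ * ∫⁻ y in ball ξ r.1, ENNReal.ofReal |f y|) ⟨1, one_pos⟩
    calc ENNReal.ofReal ‖FourierTransform.fourier q ξ‖
        = (volume (ball ξ 1))⁻¹ * (ENNReal.ofReal ‖FourierTransform.fourier q ξ‖ *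
            volume (ball ξ 1)) := by
          rw [mul_comm (ENNReal.ofReal _), ← mul_assoc, ENNReal.inv_mul_cancel h0 ht, one_mul]
      _ = (volume (ball ξ 1))⁻¹ * ∫⁻ y in ball ξ 1, ENNReal.ofReal |f y| := by rw [hconst]
      _ ≤ HLmax f ξ := h1
  simpa using hle

end FBMaux

/-- If `q` is integrable and supported in the closed unit ball, and
`|ξ - ξ'| ≤ 3`, then `|q̂(ξ)| ≤ C · M(q̂)(ξ')`, with `C = C(n)`. -/
theorem fourier_bound_by_maximal (n : ℕ) :
    ∃ C : ℝ, 0 < C ∧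
      ∀ (q : EuclideanSpace ℝ (Fin n) → ℂ),
        Integrable q volume →
        (Function.support q ⊆ closedBall 0 1) →
        ∀ ξ ξ' : EuclideanSpace ℝ (Fin n), ‖ξ - ξ'‖ ≤ 3 →
          ENNReal.ofReal ‖FourierTransform.fourier q ξ‖ ≤
            ENNReal.ofReal C * HLmax (fun y => ‖FourierTransform.fourier q y‖) ξ' := by
  match n with
  | 0 => exact ⟨1, one_pos, zerocase⟩
  | (m + 1) => exact aux (m + 1)
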